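/- Let P and Q be nonzero integers with D = P^2 - 4Q ≠ 0, let U = U(P,Q) be nondegenerate, and let p be a prime dividing both P and Q. Let n ≥ 1 satisfy gcd(p,n) = 1 and exclude the case where simultaneously p = 2, n = 1, and 2·v_2(P) > v_2(Q). Then for every k ≥ 1 there exists an integer t such that U_{p^k n} = p^{p^{k-1}}·t·U_{p^{k-1} n}. -/

import Mathlib

/-- Lucas sequence of the first kind: `U 0 = 0`, `U 1 = 1`,
`U (n+2) = P * U (n+1) - Q * U n`. -/
def lucasU (P Q : ℤ) : ℕ → ℤ
  | 0 => 0
  | 1 => 1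
  | n + 2 => P * lucasU P Q (n + 1) - Q * lucasU P Q n

/-- Lucas sequence of the second kind. -/
def lucasV (P Q : ℤ) : ℕ → ℤ
  | 0 => 2
  | 1 => P
  | n + 2 => P * lucasV P Q (n + 1) - Q * lucasV P Q n

lemma lucasU_rec (P Q : ℤ) (n : ℕ) :
    lucasU P Q (n + 2) = P * lucasU P Q (n + 1) - Q * lucasU P Q n := rfl

lemma lucasV_rec (P Q : ℤ) (n : ℕ) :
    lucasV P Q (n + 2) = P * lucasV P Q (n + 1) - Q * lucasV P Q n := rfl

/-- Addition formula. -/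
lemma lucasU_add (P Q : ℤ) (a : ℕ) : ∀ b, lucasU P Q (a + b + 1)
    = lucasU P Q (a + 1) * lucasU P Q (b + 1) - Q * lucasU P Q a * lucasU P Q b := by
  intro b
  induction b using Nat.twoStepInduction with
  | zero => simp [lucasU]
  | one =>
    show lucasU P Q (a + 2) = lucasU P Q (a + 1) * lucasU P Q 2 - Q * lucasU P Q a * lucasU P Q 1
    have h2 : lucasU P Q 2 = P := by simp [lucasU_rec, lucasU]
    rw [lucasU_rec, h2]
    simp [lucasU]
    ring
  | more n ih1 ih2 =>
    have i2 : lucasU P Q (a + n + 2)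
        = lucasU P Q (a + 1) * lucasU P Q (n + 2) - Q * lucasU P Q a * lucasU P Q (n + 1) := ih2
    have i1 : lucasU P Q (a + n + 1)
        = lucasU P Q (a + 1) * lucasU P Q (n + 1) - Q * lucasU P Q a * lucasU P Q n := ih1
    have e1 : lucasU P Q (a + n + 3) = P * lucasU P Q (a + n + 2) - Q * lucasU P Q (a + n + 1) :=
      lucasU_rec P Q (a + n + 1)
    have e2 : lucasU P Q (n + 3) = P * lucasU P Q (n + 2) - Q * lucasU P Q (n + 1) :=
      lucasU_rec P Q (n + 1)
    have e0 : lucasU P Q (n + 2) = P * lucasU P Q (n + 1) - Q * lucasU P Q n :=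
      lucasU_rec P Q n
    show lucasU P Q (a + n + 3)
        = lucasU P Q (a + 1) * lucasU P Q (n + 3) - Q * lucasU P Q a * lucasU P Q (n + 2)
    linear_combination e1 + P * i2 - Q * i1 - lucasU P Q (a + 1) * e2 + Q * lucasU P Q a * e0

/-- Cross identity. -/
lemma lucasU_cross (P Q : ℤ) (r : ℕ) : ∀ m,
    lucasU P Q (m + 1) * lucasU P Q (m + r) - lucasU P Q m * lucasU P Q (m + r + 1)
      = Q ^ m * lucasU P Q r := by
  intro m
  induction m with
  | zero => simp [lucasU]
  | succ m ih =>
    have e1 : lucasU P Q (m + 2) = P * lucasU P Q (m + 1) - Q * lucasU P Q m :=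
      lucasU_rec P Q m
    have e2 : lucasU P Q (m + r + 2) = P * lucasU P Q (m + r + 1) - Q * lucasU P Q (m + r) :=
      lucasU_rec P Q (m + r)
    show lucasU P Q (m + 2) * lucasU P Q (m + 1 + r)
        - lucasU P Q (m + 1) * lucasU P Q (m + 1 + r + 1) = Q ^ (m + 1) * lucasU P Q r
    have h2 : m + 1 + r = m + r + 1 := by omega
    have h3 : m + 1 + r + 1 = m + r + 2 := by omega
    rw [h3, h2, e1, e2]
    linear_combination Q * ih

lemma lucasV_eq (P Q : ℤ) : ∀ m,
    lucasV P Q (m + 1) = lucasU P Q (m + 2) - Q * lucasU P Q m := by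
  intro m
  induction m using Nat.twoStepInduction with
  | zero => simp [lucasU, lucasV]
  | one =>
    show lucasV P Q 2 = lucasU P Q 3 - Q * lucasU P Q 1
    have h1 : lucasV P Q 2 = P * P - Q * 2 := by
      rw [lucasV_rec]; simp [lucasV]
    have h2 : lucasU P Q 3 = P * lucasU P Q 2 - Q * lucasU P Q 1 := lucasU_rec P Q 1
    have h3 : lucasU P Q 2 = P := by simp [lucasU_rec, lucasU]
    rw [h1, h2, h3]; simp [lucasU]; ring
  | more n ih1 ih2 =>
    have e1 : lucasV P Q (n + 3) = P * lucasV P Q (n + 2) - Q * lucasV P Q (n + 1) :=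
      lucasV_rec P Q (n + 1)
    have e2 : lucasU P Q (n + 4) = P * lucasU P Q (n + 3) - Q * lucasU P Q (n + 2) :=
      lucasU_rec P Q (n + 2)
    have i2 : lucasV P Q (n + 2) = lucasU P Q (n + 3) - Q * lucasU P Q (n + 1) := ih2
    have i1 : lucasV P Q (n + 1) = lucasU P Q (n + 2) - Q * lucasU P Q n := ih1
    have e0 : lucasU P Q (n + 2) = P * lucasU P Q (n + 1) - Q * lucasU P Q n :=
      lucasU_rec P Q n
    show lucasV P Q (n + 3) = lucasU P Q (n + 4) - Q * lucasU P Q (n + 2)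
    linear_combination e1 + P * i2 - Q * i1 - e2 + Q * e0

/-- Shift identity: `U (r + m + m) = V m * U (r + m) - Q^m * U r` for `m ≥ 1`. -/
lemma lucasU_shift (P Q : ℤ) (e r : ℕ) :
    lucasU P Q (r + (e + 1) + (e + 1))
      = lucasV P Q (e + 1) * lucasU P Q (r + (e + 1)) - Q ^ (e + 1) * lucasU P Q r := by
  have hA := lucasU_add P Q (e + 1) (r + e)
  have hC := lucasU_cross P Q r e
  have hV := lucasV_eq P Q e
  have h1 : e + 1 + (r + e) + 1 = r + (e + 1) + (e + 1) := by omega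
  have h2 : e + 1 + 1 = e + 2 := by omega
  have h3 : r + e + 1 = r + (e + 1) := by omega
  rw [h1, h2, h3] at hA
  have h4 : e + r = r + e := by omega
  rw [h4] at hC
  rw [h3] at hC
  rw [hA, hV]
  linear_combination (-Q) * hC

/-- Factorization: `U (m*j) = U m * Ũ j` with `Ũ = lucasU (V m) (Q^m)`. -/
lemma lucasU_mul_fact (P Q : ℤ) (e : ℕ) : ∀ j,
    lucasU P Q ((e + 1) * j)
      = lucasU P Q (e + 1) * lucasU (lucasV P Q (e + 1)) (Q ^ (e + 1)) j := by
  intro j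
  induction j using Nat.twoStepInduction with
  | zero => simp [lucasU]
  | one => simp [lucasU]
  | more n ih1 ih2 =>
    have hs := lucasU_shift P Q e ((e + 1) * n)
    have h1 : (e + 1) * n + (e + 1) + (e + 1) = (e + 1) * (n + 2) := by ring
    have h2 : (e + 1) * n + (e + 1) = (e + 1) * (n + 1) := by ring
    rw [h1, h2] at hs
    rw [hs, lucasU_rec, ih1, ih2]
    ring

lemma prime_pow_dvd_of_sq (p : ℕ) (hp : p.Prime) (c : ℕ) (y : ℤ)
    (h : (p : ℤ) ^ (2 * c) ∣ y ^ 2) : (p : ℤ) ^ c ∣ y := by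
  rw [mul_comm 2 c, pow_mul] at h
  exact (Int.pow_dvd_pow_iff two_ne_zero).1 h

/-- Valuation lemma for first-kind sequences: `p^(j*s) ∣ (U (j+1))^2`. -/
lemma valU (p : ℕ) (hp : p.Prime) (s : ℕ) (A B : ℤ)
    (hA : (p : ℤ) ^ s ∣ A ^ 2) (hB : (p : ℤ) ^ s ∣ B) :
    ∀ j, (p : ℤ) ^ (j * s) ∣ (lucasU A B (j + 1)) ^ 2 := by
  have hB2 : (p : ℤ) ^ (2 * s) ∣ B ^ 2 := by
    have := mul_dvd_mul hB hB
    rwa [← pow_add, show s + s = 2 * s from by ring, ← pow_two] at this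
  intro j
  induction j using Nat.twoStepInduction with
  | zero => simp [lucasU]
  | one =>
    have : lucasU A B 2 = A := by simp [lucasU_rec, lucasU]
    rw [this]; simpa using hA
  | more n ih1 ih2 =>
    have hrec : lucasU A B (n + 3) = A * lucasU A B (n + 2) - B * lucasU A B (n + 1) :=
      lucasU_rec A B (n + 1)
    set u1 := lucasU A B (n + 1) with hu1
    set u2 := lucasU A B (n + 2) with hu2
    have key : (lucasU A B (n + 2 + 1)) ^ 2
        = A ^ 2 * u2 ^ 2 - 2 * (A * B * u2 * u1) + B ^ 2 * u1 ^ 2 := by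
      rw [show n + 2 + 1 = n + 3 from rfl, hrec]; ring
    rw [key]
    have t1 : (p : ℤ) ^ ((n + 2) * s) ∣ A ^ 2 * u2 ^ 2 := by
      have := mul_dvd_mul hA ih2
      rwa [← pow_add, show s + (n + 1) * s = (n + 2) * s from by ring] at this
    have t3 : (p : ℤ) ^ ((n + 2) * s) ∣ B ^ 2 * u1 ^ 2 := by
      have := mul_dvd_mul hB2 ih1
      rwa [← pow_add, show 2 * s + n * s = (n + 2) * s from by ring] at this
    have t2 : (p : ℤ) ^ ((n + 2) * s) ∣ A * B * u2 * u1 := by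
      apply prime_pow_dvd_of_sq p hp
      have hsq : (A * B * u2 * u1) ^ 2 = A ^ 2 * B ^ 2 * u2 ^ 2 * u1 ^ 2 := by ring
      rw [hsq]
      have := mul_dvd_mul (mul_dvd_mul (mul_dvd_mul hA hB2) ih2) ih1
      rwa [← pow_add, ← pow_add, ← pow_add,
        show s + 2 * s + (n + 1) * s + n * s = 2 * ((n + 2) * s) from by ring] at this
    exact dvd_add (dvd_sub t1 (Dvd.dvd.mul_left t2 2)) t3

/-- Valuation lemma for second-kind sequences: `p^((m+1)*s) ∣ (V (m+1))^2`. -/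
lemma valV (p : ℕ) (hp : p.Prime) (s : ℕ) (A B : ℤ)
    (hA : (p : ℤ) ^ s ∣ A ^ 2) (hB : (p : ℤ) ^ s ∣ B) :
    ∀ m, (p : ℤ) ^ ((m + 1) * s) ∣ (lucasV A B (m + 1)) ^ 2 := by
  have hB2 : (p : ℤ) ^ (2 * s) ∣ B ^ 2 := by
    have := mul_dvd_mul hB hB
    rwa [← pow_add, show s + s = 2 * s from by ring, ← pow_two] at this
  intro m
  induction m using Nat.twoStepInduction with
  | zero => simpa [lucasV] using hA
  | one =>
    have h2 : lucasV A B 2 = A * A - 2 * B := by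
      rw [lucasV_rec]; simp [lucasV]; ring
    rw [show (1 + 1 : ℕ) = 2 from rfl, h2]
    have key : (A * A - 2 * B) ^ 2 = A ^ 2 * A ^ 2 - 4 * (A ^ 2 * B) + 4 * B ^ 2 := by ring
    rw [key]
    have t1 : (p : ℤ) ^ (2 * s) ∣ A ^ 2 * A ^ 2 := by
      have := mul_dvd_mul hA hA
      rwa [← pow_add, show s + s = 2 * s from by ring] at this
    have t2 : (p : ℤ) ^ (2 * s) ∣ A ^ 2 * B := by
      have := mul_dvd_mul hA hB
      rwa [← pow_add, show s + s = 2 * s from by ring] at this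
    exact dvd_add (dvd_sub t1 (Dvd.dvd.mul_left t2 4)) (Dvd.dvd.mul_left hB2 4)
  | more n ih1 ih2 =>
    have hrec : lucasV A B (n + 3) = A * lucasV A B (n + 2) - B * lucasV A B (n + 1) :=
      lucasV_rec A B (n + 1)
    set v1 := lucasV A B (n + 1) with hv1
    set v2 := lucasV A B (n + 2) with hv2
    have key : (lucasV A B (n + 2 + 1)) ^ 2
        = A ^ 2 * v2 ^ 2 - 2 * (A * B * v2 * v1) + B ^ 2 * v1 ^ 2 := by
      rw [show n + 2 + 1 = n + 3 from rfl, hrec]; ring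
    rw [key]
    have t1 : (p : ℤ) ^ ((n + 3) * s) ∣ A ^ 2 * v2 ^ 2 := by
      have := mul_dvd_mul hA ih2
      rwa [← pow_add, show s + (n + 2) * s = (n + 3) * s from by ring] at this
    have t3 : (p : ℤ) ^ ((n + 3) * s) ∣ B ^ 2 * v1 ^ 2 := by
      have := mul_dvd_mul hB2 ih1
      rwa [← pow_add, show 2 * s + (n + 1) * s = (n + 3) * s from by ring] at this
    have t2 : (p : ℤ) ^ ((n + 3) * s) ∣ A * B * v2 * v1 := by
      apply prime_pow_dvd_of_sq p hp
      have hsq : (A * B * v2 * v1) ^ 2 = A ^ 2 * B ^ 2 * v2 ^ 2 * v1 ^ 2 := by ring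
      rw [hsq]
      have := mul_dvd_mul (mul_dvd_mul (mul_dvd_mul hA hB2) ih2) ih1
      rwa [← pow_add, ← pow_add, ← pow_add,
        show s + 2 * s + (n + 2) * s + (n + 1) * s = 2 * ((n + 3) * s) from by ring] at this
    exact dvd_add (dvd_sub t1 (Dvd.dvd.mul_left t2 2)) t3

theorem stmt_14 (P Q : ℤ) (hP : P ≠ 0) (hQ : Q ≠ 0) (hD : P ^ 2 - 4 * Q ≠ 0)
    (hnd : ∀ m : ℕ, 1 ≤ m → lucasU P Q m ≠ 0)
    (p : ℕ) (hp : p.Prime) (hpP : (p : ℤ) ∣ P) (hpQ : (p : ℤ) ∣ Q)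
    (n : ℕ) (hn : 1 ≤ n) (hpn : Nat.gcd p n = 1)
    (hexc : ¬ (p = 2 ∧ n = 1 ∧ 2 * padicValInt 2 P > padicValInt 2 Q))
    (k : ℕ) (hk : 1 ≤ k) :
    ∃ t : ℤ, lucasU P Q (p ^ k * n)
      = (p : ℤ) ^ (p ^ (k - 1)) * t * lucasU P Q (p ^ (k - 1) * n) := by
  -- choose the valuation weight s
  set s : ℕ := if p = 2 ∧ n = 1 then 2 else 1 with hs
  have hpsP : (p : ℤ) ^ s ∣ P ^ 2 := by
    by_cases h : p = 2 ∧ n = 1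
    · rw [hs, if_pos h]
      have : ((p : ℤ)) * (p : ℤ) ∣ P * P := mul_dvd_mul hpP hpP
      simpa [pow_two] using this
    · rw [hs, if_neg h]
      simpa using hpP.trans (dvd_pow_self P two_ne_zero)
  have hpsQ : (p : ℤ) ^ s ∣ Q := by
    by_cases h : p = 2 ∧ n = 1
    · rw [hs, if_pos h]
      obtain ⟨hp2, hn1⟩ := h
      subst hp2
      have hvP : 1 ≤ padicValInt 2 P := by
        rw [padicValInt]
        have hd : 2 ∣ P.natAbs := Int.natAbs_dvd_natAbs.2 (by simpa using hpP)
        have := one_le_padicValNat_of_dvd (Int.natAbs_ne_zero.2 hP) hd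
        simpa using this
      have hvQ : 2 ≤ padicValInt 2 Q := by
        have h1 : ¬ (2 * padicValInt 2 P > padicValInt 2 Q) := by
          intro hgt; exact hexc ⟨rfl, hn1, hgt⟩
        omega
      have h1 : ((2 : ℕ) : ℤ) ^ padicValInt 2 Q ∣ Q := padicValInt_dvd Q
      have h2 : ((2 : ℕ) : ℤ) ^ 2 ∣ ((2 : ℕ) : ℤ) ^ padicValInt 2 Q := pow_dvd_pow _ hvQ
      exact_mod_cast h2.trans h1
    · rw [hs, if_neg h]; simpa using hpQ
  have hns : 2 ≤ (p - 1) * n * s := by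
    by_cases h : p = 2 ∧ n = 1
    · rw [hs, if_pos h]; obtain ⟨h2, h1⟩ := h; subst h2; subst h1; norm_num
    · rw [hs, if_neg h]
      rcases Nat.lt_or_ge p 3 with hp3 | hp3
      · have hp2 : p = 2 := by have := hp.two_le; omega
        have hn2 : 2 ≤ n := by
          rcases Nat.lt_or_ge n 2 with h' | h'
          · exfalso; exact h ⟨hp2, by omega⟩
          · exact h'
        subst hp2; omega
      · have h2 : 2 ≤ p - 1 := by omega
        have := Nat.mul_le_mul h2 hn
        simpa using this
  -- m = p^(k-1) * n ≥ 1
  obtain ⟨e, he⟩ : ∃ e, p ^ (k - 1) * n = e + 1 := by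
    have : 1 ≤ p ^ (k - 1) * n :=
      Nat.one_le_iff_ne_zero.2 (Nat.mul_ne_zero (pow_ne_zero _ hp.pos.ne') (by omega))
    exact ⟨p ^ (k - 1) * n - 1, by omega⟩
  have hV2 : (p : ℤ) ^ ((e + 1) * s) ∣ (lucasV P Q (e + 1)) ^ 2 := valV p hp s P Q hpsP hpsQ e
  have hQm : (p : ℤ) ^ ((e + 1) * s) ∣ Q ^ (e + 1) := by
    have := pow_dvd_pow_of_dvd hpsQ (e + 1)
    rwa [← pow_mul, mul_comm s (e + 1)] at this
  have hU := valU p hp ((e + 1) * s) (lucasV P Q (e + 1)) (Q ^ (e + 1)) hV2 hQm (p - 1)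
  have hp1 : p - 1 + 1 = p := Nat.succ_pred_eq_of_pos hp.pos
  rw [hp1] at hU
  have hexp : 2 * p ^ (k - 1) ≤ (p - 1) * ((e + 1) * s) := by
    calc 2 * p ^ (k - 1) ≤ ((p - 1) * n * s) * p ^ (k - 1) := Nat.mul_le_mul_right _ hns
      _ = (p - 1) * ((e + 1) * s) := by rw [← he]; ring
  have hU2 : (p : ℤ) ^ (2 * p ^ (k - 1)) ∣ (lucasU (lucasV P Q (e + 1)) (Q ^ (e + 1)) p) ^ 2 :=
    (pow_dvd_pow _ hexp).trans hU
  have hUd : (p : ℤ) ^ (p ^ (k - 1)) ∣ lucasU (lucasV P Q (e + 1)) (Q ^ (e + 1)) p :=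
    prime_pow_dvd_of_sq p hp _ _ hU2
  obtain ⟨t, ht⟩ := hUd
  refine ⟨t, ?_⟩
  have hfact := lucasU_mul_fact P Q e p
  have hidx : p ^ k * n = (e + 1) * p := by
    rw [← he]
    have hpk : p ^ k = p ^ (k - 1) * p := by
      conv_lhs => rw [show k = (k - 1) + 1 from by omega]
      rw [pow_succ]
    rw [hpk]; ring
  rw [hidx, hfact, ht, he]
  ring
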